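/- arXiv:1903.07229 — 2 statements merged into one kernel-verified Lean document; each statement's English description precedes it below -/
import Mathlib

section
/- The bijection γ ↦ π^γ from the set ℰ_n of skew-symmetric (n,n)-clans in the largest sect to the set 𝒫_n of partial involutions on n letters is an order isomorphism from (ℰ_n, ≤_C) to (𝒫_n, ⪯): for γ, τ ∈ ℰ_n one has γ ≤_C τ if and only if π^γ ⪯ π^τ. -/
/-- A skew-symmetric `(n,n)`-clan, encoded (via the standard bijection with signed
involutions) as a pair `(σ, s)` where `σ` is an involution of the `2n` positions whose
2-cycles are the pairs of positions carrying matching natural numbers, and `s` records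
the signs at the fixed points (`true` = `+`, `false` = `−`; `s` is normalized to `true`
on non-fixed points).  The conditions say: `σ` is an involution; `s` is normalized;
there are equally many `+`'s and `−`'s among the sign symbols; and the clan equals its
reverse with all signs interchanged (`Fin.rev` is the reflection `i ↦ 2n+1−i`). -/
def IsSkewClan (n : ℕ) (σ : Equiv.Perm (Fin (2 * n))) (s : Fin (2 * n) → Bool) : Prop :=
  Function.Involutive σ ∧
  (∀ i, σ i ≠ i → s i = true) ∧
  (Finset.univ.filter (fun i => σ i = i ∧ s i = true)).card =
    (Finset.univ.filter (fun i => σ i = i ∧ s i = false)).card ∧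
  (∀ i, σ (Fin.rev i) = Fin.rev (σ i)) ∧
  (∀ i, σ i = i → s (Fin.rev i) = !(s i))

/-- `Z_n`, the number of skew-symmetric `(n,n)`-clans. -/
noncomputable def Znum (n : ℕ) : ℕ :=
  Nat.card {p : Equiv.Perm (Fin (2 * n)) × (Fin (2 * n) → Bool) // IsSkewClan n p.1 p.2}

/-- A skew-symmetric `(n,n)`-clan `(σ, s)` lies in the *largest sect* if every `−` sign
(`s i = false` at a fixed point) occupies a position in the first half, every `+` sign
occupies a position in the second half, and every pair of matching natural numbers has
one position in each half. -/
def IsLargestSectClan (n : ℕ) (σ : Equiv.Perm (Fin (2 * n))) (s : Fin (2 * n) → Bool) :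
    Prop :=
  IsSkewClan n σ s ∧
  (∀ i : Fin (2 * n), σ i = i → (s i = false ↔ i.val < n)) ∧
  (∀ i : Fin (2 * n), σ i ≠ i → (i.val < n ↔ ¬ (σ i).val < n))

/-- `ε_n`, the number of skew-symmetric `(n,n)`-clans in the largest sect. -/
noncomputable def epsnum (n : ℕ) : ℕ :=
  Nat.card {p : Equiv.Perm (Fin (2 * n)) × (Fin (2 * n) → Bool) //
    IsLargestSectClan n p.1 p.2}

/-- A *partial involution* on `n` letters: a symmetric `n × n` partial permutation
matrix (entries in `{0,1}`, at most one nonzero entry in each row and each column),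
viewed over `ℚ`. -/
def IsPartialInvolution (n : ℕ) (M : Matrix (Fin n) (Fin n) ℚ) : Prop :=
  (∀ i j, M i j = 0 ∨ M i j = 1) ∧
  (∀ i j j', M i j = 1 → M i j' = 1 → j = j') ∧
  (∀ i i' j, M i j = 1 → M i' j = 1 → i = i') ∧
  M.IsSymm

/-- `P_n`, the number of partial involutions on `n` letters. -/
noncomputable def Pnum (n : ℕ) : ℕ :=
  Nat.card {M : Matrix (Fin n) (Fin n) ℚ // IsPartialInvolution n M}

/-- The matrix `π^γ` associated to a clan `γ = (σ, s)` of the largest sect: the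
`(i,j)`-entry (with `i, j` among the first `n` positions) is `1` exactly when positions
`i` and `2n+1−j` carry matching natural numbers, i.e. when `σ` sends position `i` to
position `2n+1−j` (0-indexed: `σ ⟨i⟩ = ⟨2n−1−j⟩`); all other entries are `0`. -/
def clanMatrix (n : ℕ) (σ : Equiv.Perm (Fin (2 * n))) : Matrix (Fin n) (Fin n) ℚ :=
  fun i j =>
    if σ ⟨i.val, by have := i.isLt; omega⟩ = ⟨2 * n - 1 - j.val, by have := j.isLt; omega⟩
    then 1 else 0

/-- `γ(i;+)` for a clan `γ = (σ, s)` and a 1-indexed position `i`: the number of `+`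
signs among the first `i` symbols plus the number of pairs of matching natural numbers
both of whose positions are `≤ i` (positions are 0-indexed internally, hence `t.val < i`
means "1-indexed position `t+1 ≤ i`"). -/
def clanPlus (n : ℕ) (σ : Equiv.Perm (Fin (2 * n))) (s : Fin (2 * n) → Bool) (i : ℕ) : ℕ :=
  (Finset.univ.filter (fun t : Fin (2 * n) => t.val < i ∧ σ t = t ∧ s t = true)).card +
  (Finset.univ.filter (fun t : Fin (2 * n) => t < σ t ∧ (σ t).val < i)).card

/-- `γ(i;−)`: as `clanPlus`, with `−` signs in place of `+` signs. -/
def clanMinus (n : ℕ) (σ : Equiv.Perm (Fin (2 * n))) (s : Fin (2 * n) → Bool) (i : ℕ) : ℕ :=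
  (Finset.univ.filter (fun t : Fin (2 * n) => t.val < i ∧ σ t = t ∧ s t = false)).card +
  (Finset.univ.filter (fun t : Fin (2 * n) => t < σ t ∧ (σ t).val < i)).card

/-- `γ(i;j)` for 1-indexed positions `i < j`: the number of pairs of matching natural
numbers at (1-indexed) positions `(a,b)`, `a < b`, with `a ≤ i < j < b`. -/
def clanPair (n : ℕ) (σ : Equiv.Perm (Fin (2 * n))) (i j : ℕ) : ℕ :=
  (Finset.univ.filter
    (fun t : Fin (2 * n) => t < σ t ∧ t.val + 1 ≤ i ∧ j ≤ (σ t).val)).card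

/-- The conjectural `CI` Bruhat order on clans: `γ ≤_C τ` iff `γ(i;+) ≥ τ(i;+)` and
`γ(i;−) ≥ τ(i;−)` for all `1 ≤ i ≤ 2n`, and `γ(i;j) ≤ τ(i;j)` for all `1 ≤ i < j ≤ 2n`. -/
def BruhatCLE (n : ℕ) (γ τ : Equiv.Perm (Fin (2 * n)) × (Fin (2 * n) → Bool)) : Prop :=
  (∀ i : ℕ, 1 ≤ i → i ≤ 2 * n →
    clanPlus n τ.1 τ.2 i ≤ clanPlus n γ.1 γ.2 i ∧
    clanMinus n τ.1 τ.2 i ≤ clanMinus n γ.1 γ.2 i) ∧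
  (∀ i j : ℕ, 1 ≤ i → i < j → j ≤ 2 * n → clanPair n γ.1 i j ≤ clanPair n τ.1 i j)

/-- The rank-control order `⪯` on `n × n` matrices over `ℚ`: `M ⪯ N` iff for all
`1 ≤ k, l ≤ n` the upper-left `k × l` submatrix of `M` has rank at most that of `N`. -/
def RankControlLE (n : ℕ) (M N : Matrix (Fin n) (Fin n) ℚ) : Prop :=
  ∀ (k l : ℕ) (_ : 1 ≤ k) (hk : k ≤ n) (_ : 1 ≤ l) (hl : l ≤ n),
    (M.submatrix (Fin.castLE hk) (Fin.castLE hl)).rank ≤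
      (N.submatrix (Fin.castLE hk) (Fin.castLE hl)).rank


section StmtAux
set_option linter.unusedSectionVars false
set_option linter.unusedVariables false

open Finset

section AuxCount
variable {α : Type*} [Fintype α] [DecidableEq α]

lemma card_split (P R : α → Prop) [DecidablePred P] [DecidablePred R] :
    (univ.filter (fun a => P a ∧ R a)).card + (univ.filter (fun a => ¬ P a ∧ R a)).card
      = (univ.filter R).card := by
  classical
  rw [Finset.card_filter, Finset.card_filter, Finset.card_filter, ← Finset.sum_add_distrib]
  refine Finset.sum_congr rfl fun a _ => ?_
  by_cases hP : P a <;> by_cases hR : R a <;> simp [hP, hR]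

lemma card_filter_Ico {N a b : ℕ} (hab : a ≤ b) (hb : b ≤ N) :
    ((Finset.univ.filter (fun u : Fin N => a ≤ u.val ∧ u.val < b)).card) = b - a := by
  rw [← Nat.card_Ico a b]
  refine Finset.card_bij' (fun u _ => u.val) (fun m hm => ⟨m, ?_⟩) ?_ ?_ ?_ ?_
  · exact lt_of_lt_of_le (Finset.mem_Ico.mp hm).2 hb
  · intro u hu; simp only [mem_filter] at hu; exact Finset.mem_Ico.mpr ⟨hu.2.1, hu.2.2⟩
  · intro m hm; simp only [mem_filter, mem_univ, true_and]
    exact ⟨(Finset.mem_Ico.mp hm).1, (Finset.mem_Ico.mp hm).2⟩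
  · intro u hu; rfl
  · intro m hm; rfl

lemma card_filter_lt {N b : ℕ} (hb : b ≤ N) :
    ((Finset.univ.filter (fun u : Fin N => u.val < b)).card) = b := by
  have := card_filter_Ico (N := N) (a := 0) (b := b) (Nat.zero_le b) hb
  simpa using this

end AuxCount

section ClanFacts
variable {n : ℕ} {σ : Equiv.Perm (Fin (2 * n))} {s : Fin (2 * n) → Bool}

lemma moved_lt (h : IsLargestSectClan n σ s) {t : Fin (2 * n)} (ht : σ t ≠ t)
    (htn : t.val < n) : t < σ t := by
  have h2 := (h.2.2 t ht).1 htn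
  have : n ≤ (σ t).val := by omega
  exact Fin.lt_def.mpr (by omega)

lemma moved_gt (h : IsLargestSectClan n σ s) {t : Fin (2 * n)} (ht : σ t ≠ t)
    (htn : ¬ t.val < n) : σ t < t := by
  have h2 : (σ t).val < n := by
    by_contra hc
    exact htn ((h.2.2 t ht).2 hc)
  exact Fin.lt_def.mpr (by omega)

lemma cross (h : IsLargestSectClan n σ s) {t : Fin (2 * n)} (ht : t < σ t) :
    t.val < n ∧ n ≤ (σ t).val := by
  have hne : σ t ≠ t := by
    intro he; rw [he] at ht; exact lt_irrefl _ ht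
  have h1 : t.val < n := by
    by_contra hc
    exact absurd (lt_trans (moved_gt h hne hc) ht) (lt_irrefl _)
  exact ⟨h1, by have := (h.2.2 t hne).1 h1; omega⟩

lemma lt_iff_moved (h : IsLargestSectClan n σ s) (t : Fin (2 * n)) :
    t < σ t ↔ (σ t ≠ t ∧ t.val < n) := by
  constructor
  · intro ht
    exact ⟨fun he => by rw [he] at ht; exact lt_irrefl _ ht, (cross h ht).1⟩
  · rintro ⟨h1, h2⟩; exact moved_lt h h1 h2

lemma gt_iff_moved (h : IsLargestSectClan n σ s) (t : Fin (2 * n)) :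
    σ t < t ↔ (σ t ≠ t ∧ n ≤ t.val) := by
  constructor
  · intro ht
    have hne : σ t ≠ t := fun he => by rw [he] at ht; exact lt_irrefl _ ht
    refine ⟨hne, ?_⟩
    by_contra hc
    exact absurd (lt_trans (moved_lt h hne (by omega)) ht) (lt_irrefl _)
  · rintro ⟨h1, h2⟩; exact moved_gt h h1 (by omega)

/-- reindex pairs by their upper endpoint -/
lemma card_upper (hinv : Function.Involutive σ) (Q : Fin (2 * n) → Prop) [DecidablePred Q] :
    (univ.filter (fun t => t < σ t ∧ Q (σ t))).card
      = (univ.filter (fun u => σ u < u ∧ Q u)).card := by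
  refine Finset.card_nbij' σ σ ?_ ?_ ?_ ?_
  · intro a ha
    simp only [mem_coe, mem_filter, mem_univ, true_and] at ha ⊢
    rw [hinv a]
    exact ⟨ha.1, ha.2⟩
  · intro a ha
    simp only [mem_coe, mem_filter, mem_univ, true_and] at ha ⊢
    refine ⟨?_, ?_⟩
    · rw [hinv a]; exact ha.1
    · rw [hinv a]; exact ha.2
  · intro a _; exact hinv a
  · intro a _; exact hinv a

end ClanFacts

section CountFacts
variable {n : ℕ} {σ : Equiv.Perm (Fin (2 * n))} {s : Fin (2 * n) → Bool}

lemma sfixed_true (h : IsLargestSectClan n σ s) {t : Fin (2 * n)} (ht : σ t = t) :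
    s t = true ↔ n ≤ t.val := by
  have := h.2.1 t ht
  rcases Bool.eq_false_or_eq_true (s t) with hb | hb <;> simp [hb] at this ⊢ <;> omega

lemma clanPlus_low (h : IsLargestSectClan n σ s) {i : ℕ} (hi : i ≤ n) :
    clanPlus n σ s i = 0 := by
  unfold clanPlus
  rw [Finset.card_eq_zero.mpr, Finset.card_eq_zero.mpr]
  · rw [Finset.filter_eq_empty_iff]
    rintro t - ⟨h1, h2⟩
    exact absurd ((cross h h1).2) (by omega)
  · rw [Finset.filter_eq_empty_iff]
    rintro t - ⟨h1, h2, h3⟩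
    have := (sfixed_true h h2).1 h3
    omega

lemma clanPlus_high (h : IsLargestSectClan n σ s) {i : ℕ} (hn : n ≤ i) (hi : i ≤ 2 * n) :
    clanPlus n σ s i = i - n := by
  classical
  unfold clanPlus
  have e1 : (Finset.univ.filter (fun t : Fin (2 * n) => t.val < i ∧ σ t = t ∧ s t = true))
      = (Finset.univ.filter (fun t : Fin (2 * n) => σ t = t ∧ n ≤ t.val ∧ t.val < i)) := by
    apply Finset.filter_congr
    intro t _
    constructor
    · rintro ⟨h1, h2, h3⟩; exact ⟨h2, (sfixed_true h h2).1 h3, h1⟩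
    · rintro ⟨h1, h2, h3⟩; exact ⟨h3, h1, (sfixed_true h h1).2 h2⟩
  have e2 : (Finset.univ.filter (fun t : Fin (2 * n) => t < σ t ∧ (σ t).val < i)).card
      = (Finset.univ.filter (fun t : Fin (2 * n) => ¬ σ t = t ∧ n ≤ t.val ∧ t.val < i)).card := by
    rw [card_upper h.1.1 (fun u => u.val < i)]
    congr 1
    apply Finset.filter_congr
    intro t _
    rw [gt_iff_moved h]
    tauto
  rw [e1, e2, card_split (fun t : Fin (2 * n) => σ t = t)
    (fun t : Fin (2 * n) => n ≤ t.val ∧ t.val < i), card_filter_Ico hn hi]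

lemma clanMinus_low (h : IsLargestSectClan n σ s) {i : ℕ} (hi : i ≤ n) :
    clanMinus n σ s i + clanPair n σ i n = i := by
  classical
  unfold clanMinus clanPair
  have e0 : (Finset.univ.filter (fun t : Fin (2 * n) => t < σ t ∧ (σ t).val < i)) = ∅ := by
    rw [Finset.filter_eq_empty_iff]
    rintro t - ⟨h1, h2⟩
    exact absurd ((cross h h1).2) (by omega)
  have e1 : (Finset.univ.filter (fun t : Fin (2 * n) => t.val < i ∧ σ t = t ∧ s t = false))
      = (Finset.univ.filter (fun t : Fin (2 * n) => σ t = t ∧ 0 ≤ t.val ∧ t.val < i)) := by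
    apply Finset.filter_congr
    intro t _
    constructor
    · rintro ⟨h1, h2, _⟩; exact ⟨h2, Nat.zero_le _, h1⟩
    · rintro ⟨h1, _, h3⟩
      refine ⟨h3, h1, (h.2.1 t h1).2 (by omega)⟩
  have e2 : (Finset.univ.filter
        (fun t : Fin (2 * n) => t < σ t ∧ t.val + 1 ≤ i ∧ n ≤ (σ t).val))
      = (Finset.univ.filter (fun t : Fin (2 * n) => ¬ σ t = t ∧ 0 ≤ t.val ∧ t.val < i)) := by
    apply Finset.filter_congr
    intro t _
    constructor
    · rintro ⟨h1, h2, _⟩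
      exact ⟨(lt_iff_moved h t).1 h1 |>.1, Nat.zero_le _, by omega⟩
    · rintro ⟨h1, _, h3⟩
      have hlt := moved_lt h h1 (by omega)
      exact ⟨hlt, by omega, (cross h hlt).2⟩
  rw [e0, e1, e2]
  simp only [Finset.card_empty, add_zero]
  rw [card_split (fun t : Fin (2 * n) => σ t = t)
    (fun t : Fin (2 * n) => 0 ≤ t.val ∧ t.val < i), card_filter_Ico (Nat.zero_le _) (by omega)]
  omega

lemma clanMinus_high (h : IsLargestSectClan n σ s) {i : ℕ} (hn : n ≤ i) :
    clanMinus n σ s i + clanPair n σ n i = n := by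
  classical
  unfold clanMinus clanPair
  -- fixed part
  have e1 : (Finset.univ.filter (fun t : Fin (2 * n) => t.val < i ∧ σ t = t ∧ s t = false))
      = (Finset.univ.filter (fun t : Fin (2 * n) => σ t = t ∧ 0 ≤ t.val ∧ t.val < n)) := by
    apply Finset.filter_congr
    intro t _
    constructor
    · rintro ⟨h1, h2, h3⟩; exact ⟨h2, Nat.zero_le _, (h.2.1 t h2).1 h3⟩
    · rintro ⟨h1, _, h3⟩; exact ⟨by omega, h1, (h.2.1 t h1).2 h3⟩
  -- moved, upper endpoint < i
  have e2 : (Finset.univ.filter (fun t : Fin (2 * n) => t < σ t ∧ (σ t).val < i)).card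
      = (Finset.univ.filter (fun u : Fin (2 * n) => u.val < i ∧ (¬ σ u = u ∧ n ≤ u.val))).card := by
    rw [card_upper h.1.1 (fun u => u.val < i)]
    congr 1
    apply Finset.filter_congr
    intro t _
    rw [gt_iff_moved h]
    tauto
  -- moved, upper endpoint >= i
  have e3 : (Finset.univ.filter
        (fun t : Fin (2 * n) => t < σ t ∧ t.val + 1 ≤ n ∧ i ≤ (σ t).val)).card
      = (Finset.univ.filter
        (fun u : Fin (2 * n) => ¬ u.val < i ∧ (¬ σ u = u ∧ n ≤ u.val))).card := by
    have : (Finset.univ.filter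
        (fun t : Fin (2 * n) => t < σ t ∧ t.val + 1 ≤ n ∧ i ≤ (σ t).val))
        = (Finset.univ.filter (fun t : Fin (2 * n) => t < σ t ∧ i ≤ (σ t).val)) := by
      apply Finset.filter_congr
      intro t _
      constructor
      · rintro ⟨h1, _, h3⟩; exact ⟨h1, h3⟩
      · rintro ⟨h1, h3⟩; exact ⟨h1, by have := (cross h h1).1; omega, h3⟩
    rw [this, card_upper h.1.1 (fun u => i ≤ u.val)]
    congr 1
    apply Finset.filter_congr
    intro t _
    rw [gt_iff_moved h]
    constructor
    · rintro ⟨⟨h1, h2⟩, h3⟩; exact ⟨by omega, h1, h2⟩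
    · rintro ⟨h1, h2, h3⟩; exact ⟨⟨h2, h3⟩, by omega⟩
  rw [e1, e2, e3]
  have e4 := card_split (fun u : Fin (2 * n) => u.val < i)
    (fun u : Fin (2 * n) => ¬ σ u = u ∧ n ≤ u.val)
  have e5 : (Finset.univ.filter (fun u : Fin (2 * n) => ¬ σ u = u ∧ n ≤ u.val)).card
      = (Finset.univ.filter (fun u : Fin (2 * n) => ¬ σ u = u ∧ 0 ≤ u.val ∧ u.val < n)).card := by
    have eA : (Finset.univ.filter (fun u : Fin (2 * n) => ¬ σ u = u ∧ n ≤ u.val))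
        = (Finset.univ.filter (fun u : Fin (2 * n) => σ u < u)) := by
      apply Finset.filter_congr
      intro t _
      rw [gt_iff_moved h]
    have eB : (Finset.univ.filter (fun u : Fin (2 * n) => ¬ σ u = u ∧ 0 ≤ u.val ∧ u.val < n))
        = (Finset.univ.filter (fun u : Fin (2 * n) => u < σ u)) := by
      apply Finset.filter_congr
      intro t _
      constructor
      · rintro ⟨h1, _, h3⟩; exact moved_lt h h1 h3
      · intro h1
        have := (lt_iff_moved h t).1 h1
        exact ⟨this.1, Nat.zero_le _, this.2⟩
    have eC := card_upper (σ := σ) h.1.1 (fun _ => True)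
    simp only [and_true] at eC
    rw [eA, eB, eC]
  have e6 := card_split (fun t : Fin (2 * n) => σ t = t)
    (fun t : Fin (2 * n) => 0 ≤ t.val ∧ t.val < n)
  rw [card_filter_Ico (Nat.zero_le _) (by omega)] at e6
  omega

lemma clanPair_clamp_left (h : IsLargestSectClan n σ s) {i j : ℕ} (hi : n ≤ i) :
    clanPair n σ i j = clanPair n σ n j := by
  unfold clanPair
  congr 1
  apply Finset.filter_congr
  intro t _
  constructor
  · rintro ⟨h1, _, h3⟩; exact ⟨h1, by have := (cross h h1).1; omega, h3⟩
  · rintro ⟨h1, _, h3⟩; exact ⟨h1, by have := (cross h h1).1; omega, h3⟩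

lemma clanPair_clamp_right (h : IsLargestSectClan n σ s) {i j : ℕ} (hj : j ≤ n) :
    clanPair n σ i j = clanPair n σ i n := by
  unfold clanPair
  congr 1
  apply Finset.filter_congr
  intro t _
  constructor
  · rintro ⟨h1, h2, _⟩; exact ⟨h1, h2, (cross h h1).2⟩
  · rintro ⟨h1, h2, h3⟩; exact ⟨h1, h2, by omega⟩

lemma clanPair_top {i : ℕ} : clanPair n σ i (2 * n) = 0 := by
  unfold clanPair
  rw [Finset.card_eq_zero.mpr]
  rw [Finset.filter_eq_empty_iff]
  rintro t - ⟨h1, h2, h3⟩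
  have := (σ t).isLt
  omega

lemma clanPair_clamp (h : IsLargestSectClan n σ s) (i j : ℕ) :
    clanPair n σ i j = clanPair n σ (min i n) (max j n) := by
  by_cases hi : i ≤ n <;> by_cases hj : n ≤ j
  · rw [min_eq_left hi, max_eq_left hj]
  · rw [min_eq_left hi, max_eq_right (by omega)]
    exact clanPair_clamp_right h (by omega)
  · rw [min_eq_right (by omega), max_eq_left hj]
    exact clanPair_clamp_left h (by omega)
  · rw [min_eq_right (by omega), max_eq_right (by omega),
      clanPair_clamp_left h (le_of_not_ge hi), clanPair_clamp_right h (by omega)]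

end CountFacts

section OrderEquiv
variable {n : ℕ} {γ τ : Equiv.Perm (Fin (2 * n)) × (Fin (2 * n) → Bool)}

theorem bruhat_iff_star (hγ : IsLargestSectClan n γ.1 γ.2) (hτ : IsLargestSectClan n τ.1 τ.2) :
    BruhatCLE n γ τ ↔ ∀ k l : ℕ, 1 ≤ k → k ≤ n → 1 ≤ l → l ≤ n →
      clanPair n γ.1 k (2 * n - l) ≤ clanPair n τ.1 k (2 * n - l) := by
  constructor
  · intro B k l hk hkn hl hln
    by_cases hkl : k < 2 * n - l
    · exact B.2 k (2 * n - l) hk hkl (by omega)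
    · have hk' : k = n := by omega
      have hl' : 2 * n - l = n := by omega
      rw [hk', hl']
      have g1 := clanMinus_high hγ (i := n) le_rfl
      have g2 := clanMinus_high hτ (i := n) le_rfl
      have g3 := (B.1 n (by omega) (by omega)).2
      omega
  · intro S
    constructor
    · intro i h1 h2
      constructor
      · by_cases hin : i ≤ n
        · rw [clanPlus_low hγ hin, clanPlus_low hτ hin]
        · rw [clanPlus_high hγ (by omega) h2, clanPlus_high hτ (by omega) h2]
      · by_cases hin : i ≤ n
        · have g1 := clanMinus_low hγ hin
          have g2 := clanMinus_low hτ hin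
          have g3 := S i n h1 hin (by omega) le_rfl
          rw [show 2 * n - n = n from by omega] at g3
          omega
        · by_cases hi2 : i ≤ 2 * n - 1
          · have g3 := S n (2 * n - i) (by omega) le_rfl (by omega) (by omega)
            rw [show 2 * n - (2 * n - i) = i from by omega] at g3
            have g1 := clanMinus_high hγ (i := i) (by omega)
            have g2 := clanMinus_high hτ (i := i) (by omega)
            omega
          · have hi3 : i = 2 * n := by omega
            subst hi3
            have g1 := clanMinus_high hγ (i := 2 * n) (by omega)
            have g2 := clanMinus_high hτ (i := 2 * n) (by omega)
            rw [clanPair_top] at g1 g2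
            omega
    · intro i j h1 hij h2
      have hn : 1 ≤ n := by omega
      rw [clanPair_clamp hγ i j, clanPair_clamp hτ i j]
      by_cases hj2 : j = 2 * n
      · subst hj2
        rw [max_eq_left (by omega), clanPair_top, clanPair_top]
      · have g3 := S (min i n) (2 * n - max j n) (by omega) (by omega) (by omega) (by omega)
        rw [show 2 * n - (2 * n - max j n) = max j n from by omega] at g3
        exact g3

end OrderEquiv

section RankFacts
variable {n : ℕ} {σ : Equiv.Perm (Fin (2 * n))} {s : Fin (2 * n) → Bool}

lemma clanMatrix_eq_one_iff {i j : Fin n} :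
    clanMatrix n σ i j = 1 ↔
      σ ⟨i.val, by have := i.isLt; omega⟩ = ⟨2 * n - 1 - j.val, by have := j.isLt; omega⟩ := by
  unfold clanMatrix
  split_ifs with hc
  · simp [hc]
  · simp [hc]

lemma clanMatrix_zero_or_one (i j : Fin n) :
    clanMatrix n σ i j = 0 ∨ clanMatrix n σ i j = 1 := by
  unfold clanMatrix
  split_ifs <;> simp

theorem rank_block (h : IsLargestSectClan n σ s) {k l : ℕ} (hk : k ≤ n) (hl : l ≤ n) :
    ((clanMatrix n σ).submatrix (Fin.castLE hk) (Fin.castLE hl)).rank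
      = clanPair n σ k (2 * n - l) := by
  classical
  set A : Matrix (Fin k) (Fin l) ℚ :=
    (clanMatrix n σ).submatrix (Fin.castLE hk) (Fin.castLE hl) with hA
  have hAone : ∀ (i : Fin k) (j : Fin l), A i j = 1 ↔
      σ ⟨i.val, by have := i.isLt; omega⟩ = ⟨2 * n - 1 - j.val, by have := j.isLt; omega⟩ := by
    intro i j
    rw [hA, Matrix.submatrix_apply, clanMatrix_eq_one_iff]
    constructor <;> (intro hc; convert hc using 2 <;> rfl)
  have hA01 : ∀ (i : Fin k) (j : Fin l), A i j = 0 ∨ A i j = 1 := fun i j =>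
    clanMatrix_zero_or_one _ _
  set T : Finset (Fin k) := Finset.univ.filter
    (fun i : Fin k => σ ⟨i.val, by have := i.isLt; omega⟩ ≠ ⟨i.val, by have := i.isLt; omega⟩ ∧
      2 * n - l ≤ (σ ⟨i.val, by have := i.isLt; omega⟩).val) with hT
  -- row membership
  have hrow_mem : ∀ (i : Fin k) (j : Fin l), A i j = 1 → i ∈ T := by
    intro i j hij
    have h1 := (hAone i j).1 hij
    have hjl := j.isLt
    have hil := i.isLt
    simp only [hT, Finset.mem_filter, Finset.mem_univ, true_and]
    constructor
    · intro he
      rw [he] at h1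
      have := congrArg Fin.val h1
      simp at this
      omega
    · rw [h1]
      simp
      omega
  -- the column containing the 1 of a row in T
  have hjof : ∀ i ∈ T, ∃ j : Fin l, A i j = 1 := by
    intro i hi
    simp only [hT, Finset.mem_filter, Finset.mem_univ, true_and] at hi
    have hv := (σ (⟨i.val, by have := i.isLt; omega⟩ : Fin (2 * n))).isLt
    refine ⟨⟨2 * n - 1 - (σ ⟨i.val, by have := i.isLt; omega⟩).val, by omega⟩, ?_⟩
    rw [hAone]
    apply Fin.ext
    simp
    omega
  -- column uniqueness: a column has at most one 1
  have hcol : ∀ (i i' : Fin k) (j : Fin l), A i j = 1 → A i' j = 1 → i = i' := by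
    intro i i' j h1 h2
    rw [hAone] at h1 h2
    have := σ.injective (h1.trans h2.symm)
    have := congrArg Fin.val this
    exact Fin.ext this
  -- a column with a 1 at row i equals the standard basis vector at i
  have hsingle : ∀ (i : Fin k) (j : Fin l), A i j = 1 → A.transpose j = Pi.single i 1 := by
    intro i j hij
    funext i'
    rw [Matrix.transpose_apply]
    rcases eq_or_ne i' i with rfl | hne
    · rw [hij, Pi.single_eq_same]
    · rw [Pi.single_eq_of_ne hne]
      rcases hA01 i' j with h0 | h1
      · exact h0
      · exact absurd (hcol i' i j h1 hij) hne
  -- span of columns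
  have hspan : Submodule.span ℚ (Set.range A.transpose)
      = Submodule.span ℚ ((T.image (fun i => Pi.single i (1 : ℚ))) : Set (Fin k → ℚ)) := by
    apply le_antisymm
    · rw [Submodule.span_le]
      rintro _ ⟨j, rfl⟩
      by_cases hj : ∃ i, A i j = 1
      · obtain ⟨i, hi⟩ := hj
        rw [hsingle i j hi]
        apply Submodule.subset_span
        simp only [Finset.coe_image, Set.mem_image, Finset.mem_coe]
        exact ⟨i, hrow_mem i j hi, rfl⟩
      · have : A.transpose j = 0 := by
          funext i'
          rw [Matrix.transpose_apply]
          rcases hA01 i' j with h0 | h1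
          · exact h0
          · exact absurd ⟨i', h1⟩ hj
        rw [this]
        exact Submodule.zero_mem _
    · rw [Submodule.span_le]
      rintro _ hx
      simp only [Finset.coe_image, Set.mem_image, Finset.mem_coe] at hx
      obtain ⟨i, hiT, rfl⟩ := hx
      obtain ⟨j, hj⟩ := hjof i hiT
      rw [← hsingle i j hj]
      exact Submodule.subset_span ⟨j, rfl⟩
  have hrank : A.rank = T.card := by
    rw [Matrix.rank, Matrix.range_mulVecLin, show Set.range A.col = Set.range A.transpose from rfl, hspan]
    rw [finrank_span_finset_eq_card]
    · rw [Finset.card_image_of_injective]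
      intro a b hab
      have h2 := congrFun hab a
      simp only [Pi.single_eq_same] at h2
      by_contra hne
      rw [Pi.single_eq_of_ne hne] at h2
      exact one_ne_zero h2
    · -- linear independence of a set of distinct standard basis vectors
      have hsub : ((T.image (fun i => Pi.single i (1 : ℚ))) : Set (Fin k → ℚ))
          ⊆ Set.range (fun i : Fin k => Pi.single i (1 : ℚ)) := by
        intro x hx
        simp only [Finset.coe_image, Set.mem_image, Finset.mem_coe] at hx
        obtain ⟨i, _, rfl⟩ := hx
        exact ⟨i, rfl⟩
      have hli : LinearIndependent ℚ (fun i : Fin k => Pi.single i (1 : ℚ)) := by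
        have h0 := (Pi.basisFun ℚ (Fin k)).linearIndependent
        have h1 : ⇑(Pi.basisFun ℚ (Fin k)) = fun i : Fin k => Pi.single i (1 : ℚ) := by
          funext i
          rw [Pi.basisFun_apply]
        rwa [h1] at h0
      exact ((linearIndepOn_id_range_iff hli.injective).mpr hli).mono hsub
  rw [hrank]
  unfold clanPair
  refine Finset.card_bij' (fun i _ => (⟨i.val, by have := i.isLt; omega⟩ : Fin (2 * n)))
    (fun t ht => ⟨t.val, ?_⟩) ?_ ?_ ?_ ?_
  · simp only [Finset.mem_filter, Finset.mem_univ, true_and] at ht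
    omega
  · intro i hi
    simp only [hT, Finset.mem_filter, Finset.mem_univ, true_and] at hi ⊢
    have hv1 : i.val < n := by have := i.isLt; omega
    have hlt : (⟨i.val, by have := i.isLt; omega⟩ : Fin (2 * n)) <
        σ ⟨i.val, by have := i.isLt; omega⟩ :=
      moved_lt h hi.1 hv1
    exact ⟨hlt, by have := i.isLt; omega, hi.2⟩
  · intro t ht
    simp only [Finset.mem_filter, Finset.mem_univ, true_and] at ht
    obtain ⟨h1, h2, h3⟩ := ht
    simp only [hT, Finset.mem_filter, Finset.mem_univ, true_and, Fin.eta]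
    exact ⟨fun he => by rw [he] at h1; exact lt_irrefl _ h1, h3⟩
  · intro i hi; exact Fin.ext rfl
  · intro t ht; exact Fin.ext rfl

end RankFacts

def half (n : ℕ) (j : Fin n) : Fin (2 * n) := ⟨j.val, by have := j.isLt; omega⟩

def upper (n : ℕ) (j : Fin n) : Fin (2 * n) := ⟨2 * n - 1 - j.val, by have := j.isLt; omega⟩

section HalfUpper
variable {n : ℕ} {σ : Equiv.Perm (Fin (2 * n))} {s : Fin (2 * n) → Bool}

lemma val_half (j : Fin n) : (half n j).val = j.val := rfl

lemma val_upper (j : Fin n) : (upper n j).val = 2 * n - 1 - j.val := rfl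

lemma half_lt (j : Fin n) : (half n j).val < n := j.isLt

lemma upper_ge (j : Fin n) : n ≤ (upper n j).val := by
  rw [val_upper]
  have := j.isLt
  omega

lemma upper_eq_rev (j : Fin n) : upper n j = Fin.rev (half n j) := by
  apply Fin.ext
  rw [val_upper, Fin.val_rev, val_half]
  have := j.isLt
  omega

lemma half_inj {a b : Fin n} (hab : half n a = half n b) : a = b := by
  have := congrArg Fin.val hab
  rw [val_half, val_half] at this
  exact Fin.ext this

lemma upper_inj {a b : Fin n} (hab : upper n a = upper n b) : a = b := by
  have := congrArg Fin.val hab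
  rw [val_upper, val_upper] at this
  have ha := a.isLt
  have hb := b.isLt
  exact Fin.ext (by omega)

lemma half_surj (u : Fin (2 * n)) (hu : u.val < n) : u = half n ⟨u.val, hu⟩ :=
  Fin.ext rfl

lemma upper_surj (u : Fin (2 * n)) (hu : n ≤ u.val) :
    u = upper n ⟨2 * n - 1 - u.val, by have := u.isLt; omega⟩ := by
  apply Fin.ext
  rw [val_upper]
  have := u.isLt
  simp only
  omega

lemma clanMatrix_one_iff {i j : Fin n} :
    clanMatrix n σ i j = 1 ↔ σ (half n i) = upper n j := by
  rw [clanMatrix_eq_one_iff]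
  constructor <;> (intro hx; convert hx using 2 <;> rfl)

lemma swap_iff (hinv : Function.Involutive σ)
    (hskew : ∀ i, σ (Fin.rev i) = Fin.rev (σ i)) (a b : Fin (2 * n)) :
    σ b = Fin.rev a ↔ σ a = Fin.rev b := by
  have key : ∀ a b : Fin (2 * n), σ b = Fin.rev a → σ a = Fin.rev b := by
    intro a b hba
    have h1 : σ (Fin.rev a) = b := by rw [← hba, hinv]
    calc σ a = σ (Fin.rev (Fin.rev a)) := by rw [Fin.rev_rev]
    _ = Fin.rev (σ (Fin.rev a)) := hskew _
    _ = Fin.rev b := by rw [h1]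
  exact ⟨key a b, key b a⟩

lemma clanMatrix_partialInvolution (h : IsLargestSectClan n σ s) :
    IsPartialInvolution n (clanMatrix n σ) := by
  refine ⟨fun i j => clanMatrix_zero_or_one i j, ?_, ?_, ?_⟩
  · intro i j j' h1 h2
    rw [clanMatrix_one_iff] at h1 h2
    exact upper_inj (h1.symm.trans h2)
  · intro i i' j h1 h2
    rw [clanMatrix_one_iff] at h1 h2
    exact half_inj (σ.injective (h1.trans h2.symm))
  · show (clanMatrix n σ).transpose = clanMatrix n σ
    have key : ∀ i j : Fin n, clanMatrix n σ j i = 1 → clanMatrix n σ i j = 1 := by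
      intro i j hji
      rw [clanMatrix_one_iff] at hji ⊢
      rw [upper_eq_rev] at hji ⊢
      exact (swap_iff h.1.1 h.1.2.2.2.1 _ _).1 hji
    funext i j
    rw [Matrix.transpose_apply]
    rcases clanMatrix_zero_or_one (σ := σ) j i with h0 | h1
    · rcases clanMatrix_zero_or_one (σ := σ) i j with g0 | g1
      · rw [h0, g0]
      · exact absurd (key j i g1) (by rw [h0]; exact zero_ne_one)
    · rw [h1, key i j h1]

lemma clan_eq_of_matrix_eq {σ₁ σ₂ : Equiv.Perm (Fin (2 * n))} {s₁ s₂ : Fin (2 * n) → Bool}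
    (h₁ : IsLargestSectClan n σ₁ s₁) (h₂ : IsLargestSectClan n σ₂ s₂)
    (hmat : clanMatrix n σ₁ = clanMatrix n σ₂) : σ₁ = σ₂ ∧ s₁ = s₂ := by
  have hiff : ∀ u j : Fin n, σ₁ (half n u) = upper n j ↔ σ₂ (half n u) = upper n j := by
    intro u j
    have hM := congrFun (congrFun hmat u) j
    have e1 := clanMatrix_one_iff (σ := σ₁) (i := u) (j := j)
    have e2 := clanMatrix_one_iff (σ := σ₂) (i := u) (j := j)
    constructor
    · intro hx
      exact e2.1 (by rw [← hM]; exact e1.2 hx)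
    · intro hx
      exact e1.1 (by rw [hM]; exact e2.2 hx)
  have hfirst : ∀ u : Fin n, σ₁ (half n u) = σ₂ (half n u) := by
    intro u
    by_cases hm : σ₁ (half n u) = half n u
    · by_contra hne
      have hm2 : σ₂ (half n u) ≠ half n u := fun he => hne (hm.trans he.symm)
      have hv : n ≤ (σ₂ (half n u)).val := by
        have := (h₂.2.2 _ hm2).1 (half_lt u)
        omega
      have hj := upper_surj _ hv
      have := (hiff u _).2 hj
      rw [hm] at this
      have hval := congrArg Fin.val this
      rw [val_half] at hval
      have := upper_ge (n := n) ⟨2 * n - 1 - (σ₂ (half n u)).val, by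
        have := (σ₂ (half n u)).isLt; omega⟩
      have hu := u.isLt
      omega
    · have hv : n ≤ (σ₁ (half n u)).val := by
        have := (h₁.2.2 _ hm).1 (half_lt u)
        omega
      have hj := upper_surj _ hv
      have h2 := (hiff u _).1 hj
      rw [hj, h2]
  have hσ : σ₁ = σ₂ := by
    apply Equiv.ext
    intro i
    by_cases hi : i.val < n
    · rw [half_surj i hi]
      exact hfirst _
    · have hrev : (Fin.rev i).val < n := by
        rw [Fin.val_rev]
        have := i.isLt
        omega
      have e1 : σ₁ i = Fin.rev (σ₁ (Fin.rev i)) := by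
        rw [← h₁.1.2.2.2.1 (Fin.rev i), Fin.rev_rev]
      have e2 : σ₂ i = Fin.rev (σ₂ (Fin.rev i)) := by
        rw [← h₂.1.2.2.2.1 (Fin.rev i), Fin.rev_rev]
      rw [e1, e2, half_surj _ hrev, hfirst]
  refine ⟨hσ, ?_⟩
  funext i
  by_cases hm : σ₁ i = i
  · have hm2 : σ₂ i = i := by rw [← hσ]; exact hm
    by_cases hi : i.val < n
    · rw [(h₁.2.1 i hm).2 hi, (h₂.2.1 i hm2).2 hi]
    · have g1 : s₁ i ≠ false := fun he => hi ((h₁.2.1 i hm).1 he)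
      have g2 : s₂ i ≠ false := fun he => hi ((h₂.2.1 i hm2).1 he)
      rw [Bool.ne_false_iff] at g1 g2
      rw [g1, g2]
  · have hm2 : σ₂ i ≠ i := by rw [← hσ]; exact hm
    rw [h₁.1.2.1 i hm, h₂.1.2.1 i hm2]

end HalfUpper

section Surj
variable {n : ℕ} (M : Matrix (Fin n) (Fin n) ℚ)

noncomputable def pivFun : Fin (2 * n) → Fin (2 * n) := fun i =>
  if hi : i.val < n then
    if h : ∃ j : Fin n, M ⟨i.val, hi⟩ j = 1 then upper n h.choose else i
  else
    if h : ∃ j : Fin n, M ⟨2 * n - 1 - i.val, by have := i.isLt; omega⟩ j = 1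
    then half n h.choose else i

variable {M}

lemma pivFun_lo (hM : IsPartialInvolution n M) (i : Fin (2 * n)) (hi : i.val < n) :
    (pivFun M i = i ∧ ∀ j, M ⟨i.val, hi⟩ j ≠ 1) ∨
    ∃ j : Fin n, M ⟨i.val, hi⟩ j = 1 ∧ pivFun M i = upper n j := by
  unfold pivFun
  rw [dif_pos hi]
  by_cases h : ∃ j : Fin n, M ⟨i.val, hi⟩ j = 1
  · right
    refine ⟨h.choose, h.choose_spec, dif_pos h⟩
  · left
    exact ⟨dif_neg h, fun j hj => h ⟨j, hj⟩⟩

lemma pivFun_hi (hM : IsPartialInvolution n M) (i : Fin (2 * n)) (hi : ¬ i.val < n) :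
    (pivFun M i = i ∧ ∀ j, M ⟨2 * n - 1 - i.val, by have := i.isLt; omega⟩ j ≠ 1) ∨
    ∃ j : Fin n, M ⟨2 * n - 1 - i.val, by have := i.isLt; omega⟩ j = 1 ∧
      pivFun M i = half n j := by
  unfold pivFun
  rw [dif_neg hi]
  by_cases h : ∃ j : Fin n, M ⟨2 * n - 1 - i.val, by have := i.isLt; omega⟩ j = 1
  · right
    refine ⟨h.choose, h.choose_spec, dif_pos h⟩
  · left
    exact ⟨dif_neg h, fun j hj => h ⟨j, hj⟩⟩

lemma upper_mk (i : Fin (2 * n)) (hi : ¬ i.val < n) :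
    upper n ⟨2 * n - 1 - i.val, by have := i.isLt; omega⟩ = i := by
  apply Fin.ext
  rw [val_upper]
  show 2 * n - 1 - (2 * n - 1 - i.val) = i.val
  have := i.isLt
  omega

theorem exists_clan_of_partialInvolution (hM : IsPartialInvolution n M) :
    ∃ (σ : Equiv.Perm (Fin (2 * n))) (s : Fin (2 * n) → Bool),
      IsLargestSectClan n σ s ∧ clanMatrix n σ = M := by
  classical
  have hsym : ∀ u v : Fin n, M u v = 1 → M v u = 1 := by
    intro u v huv
    have h2 := congrFun (congrFun hM.2.2.2 v) u
    rw [Matrix.transpose_apply] at h2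
    rw [← h2]
    exact huv
  have hrowu : ∀ (u j j' : Fin n), M u j = 1 → M u j' = 1 → j = j' := hM.2.1
  -- involutivity
  have hinv : Function.Involutive (pivFun M) := by
    intro i
    by_cases hi : i.val < n
    · rcases pivFun_lo hM i hi with ⟨he, -⟩ | ⟨j, hj, he⟩
      · rw [he, he]
      · rw [he]
        have hge : ¬ (upper n j).val < n := by have := upper_ge j; omega
        have hr : (⟨2 * n - 1 - (upper n j).val, by have := (upper n j).isLt; omega⟩ : Fin n)
            = j := by
          apply Fin.ext
          show 2 * n - 1 - (upper n j).val = j.val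
          rw [val_upper]
          have := j.isLt
          omega
        rcases pivFun_hi hM (upper n j) hge with ⟨he2, hno⟩ | ⟨j', hj', he2⟩
        · exfalso
          rw [hr] at hno
          exact hno ⟨i.val, hi⟩ (hsym _ _ hj)
        · rw [hr] at hj'
          have hj'' : j' = ⟨i.val, hi⟩ := hrowu j j' ⟨i.val, hi⟩ hj' (hsym _ _ hj)
          rw [he2, hj'']
          exact Fin.ext rfl
    · rcases pivFun_hi hM i hi with ⟨he, -⟩ | ⟨j, hj, he⟩
      · rw [he, he]
      · rw [he]
        have hlt : (half n j).val < n := half_lt j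
        have hr : (⟨(half n j).val, hlt⟩ : Fin n) = j := Fin.ext rfl
        rcases pivFun_lo hM (half n j) hlt with ⟨he2, hno⟩ | ⟨j', hj', he2⟩
        · exfalso
          rw [hr] at hno
          exact hno ⟨2 * n - 1 - i.val, by have := i.isLt; omega⟩ (hsym _ _ hj)
        · rw [hr] at hj'
          have hj'' : j' = ⟨2 * n - 1 - i.val, by have := i.isLt; omega⟩ :=
            hrowu j j' _ hj' (hsym _ _ hj)
          rw [he2, hj'']
          exact upper_mk i hi
  -- skew-symmetry
  have hskew : ∀ i, pivFun M (Fin.rev i) = Fin.rev (pivFun M i) := by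
    intro i
    by_cases hi : i.val < n
    · have hrevge : ¬ (Fin.rev i).val < n := by
        rw [Fin.val_rev]
        have := i.isLt
        omega
      have hr : (⟨2 * n - 1 - (Fin.rev i).val, by have := (Fin.rev i).isLt; omega⟩ : Fin n)
          = ⟨i.val, hi⟩ := by
        apply Fin.ext
        show 2 * n - 1 - (Fin.rev i).val = i.val
        rw [Fin.val_rev]
        have := i.isLt
        omega
      rcases pivFun_lo hM i hi with ⟨he, hno⟩ | ⟨j, hj, he⟩
      · rw [he]
        rcases pivFun_hi hM (Fin.rev i) hrevge with ⟨he2, -⟩ | ⟨j, hj2, he2⟩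
        · exact he2
        · exfalso
          rw [hr] at hj2
          exact hno j hj2
      · rw [he]
        have hrevup : Fin.rev (upper n j) = half n j := by
          rw [upper_eq_rev, Fin.rev_rev]
        rw [hrevup]
        rcases pivFun_hi hM (Fin.rev i) hrevge with ⟨he2, hno⟩ | ⟨j', hj2, he2⟩
        · exfalso
          rw [hr] at hno
          exact hno j hj
        · rw [hr] at hj2
          rw [he2, hrowu _ _ _ hj2 hj]
    · have hrevlt : (Fin.rev i).val < n := by
        rw [Fin.val_rev]
        have := i.isLt
        omega
      have hr : (⟨(Fin.rev i).val, hrevlt⟩ : Fin n)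
          = ⟨2 * n - 1 - i.val, by have := i.isLt; omega⟩ := by
        apply Fin.ext
        show (Fin.rev i).val = 2 * n - 1 - i.val
        rw [Fin.val_rev]
        omega
      rcases pivFun_hi hM i hi with ⟨he, hno⟩ | ⟨j, hj, he⟩
      · rw [he]
        rcases pivFun_lo hM (Fin.rev i) hrevlt with ⟨he2, -⟩ | ⟨j, hj2, he2⟩
        · exact he2
        · exfalso
          rw [hr] at hj2
          exact hno j hj2
      · rw [he]
        rw [← upper_eq_rev]
        rcases pivFun_lo hM (Fin.rev i) hrevlt with ⟨he2, hno⟩ | ⟨j', hj2, he2⟩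
        · exfalso
          rw [hr] at hno
          exact hno j hj
        · rw [hr] at hj2
          rw [he2, hrowu _ _ _ hj2 hj]
  -- the sign function
  have hs_false : ∀ i : Fin (2 * n),
      (if pivFun M i = i ∧ i.val < n then false else true) = false ↔
        (pivFun M i = i ∧ i.val < n) := by
    intro i
    split_ifs with hc
    · simp [hc]
    · simp [hc]
  have hs_true : ∀ i : Fin (2 * n),
      (if pivFun M i = i ∧ i.val < n then false else true) = true ↔
        ¬ (pivFun M i = i ∧ i.val < n) := by
    intro i
    split_ifs with hc
    · simp [hc]
    · simp [hc]
  -- moved points cross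
  have hmoved : ∀ i : Fin (2 * n), pivFun M i ≠ i →
      (i.val < n ↔ ¬ (pivFun M i).val < n) := by
    intro i hne
    by_cases hi : i.val < n
    · rcases pivFun_lo hM i hi with ⟨he, -⟩ | ⟨j, hj, he⟩
      · exact absurd he hne
      · rw [he]
        exact iff_of_true hi (by have := upper_ge j; omega)
    · rcases pivFun_hi hM i hi with ⟨he, -⟩ | ⟨j, hj, he⟩
      · exact absurd he hne
      · rw [he]
        exact iff_of_false hi (fun hc => hc (half_lt j))
  refine ⟨hinv.toPerm (pivFun M),
    fun i => if pivFun M i = i ∧ i.val < n then false else true,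
    ⟨⟨hinv, ?_, ?_, hskew, ?_⟩, ?_, ?_⟩, ?_⟩
  · -- normalization
    intro i hne
    have hne' : pivFun M i ≠ i := hne
    exact (hs_true i).2 (fun hc => hne' hc.1)
  · -- balance of signs
    apply Finset.card_nbij' Fin.rev Fin.rev
    · intro a ha
      simp only [Finset.mem_coe, Finset.mem_filter, Finset.mem_univ, true_and] at ha ⊢
      obtain ⟨h1, h2⟩ := ha
      have h1' : pivFun M a = a := h1
      have h3 := (hs_true a).1 h2
      have h4 : ¬ a.val < n := fun hc => h3 ⟨h1', hc⟩
      have h5 : pivFun M (Fin.rev a) = Fin.rev a := by rw [hskew, h1']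
      refine ⟨h5, (hs_false _).2 ⟨h5, ?_⟩⟩
      rw [Fin.val_rev]
      have := a.isLt
      omega
    · intro a ha
      simp only [Finset.mem_coe, Finset.mem_filter, Finset.mem_univ, true_and] at ha ⊢
      obtain ⟨h1, h2⟩ := ha
      have h1' : pivFun M a = a := h1
      have h3 := ((hs_false a).1 h2).2
      have h5 : pivFun M (Fin.rev a) = Fin.rev a := by rw [hskew, h1']
      refine ⟨h5, (hs_true _).2 ?_⟩
      rintro ⟨-, hc⟩
      rw [Fin.val_rev] at hc
      omega
    · intro a _; exact Fin.rev_rev a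
    · intro a _; exact Fin.rev_rev a
  · -- sign flip at fixed points
    intro i hfix
    have hfix' : pivFun M i = i := hfix
    have h5 : pivFun M (Fin.rev i) = Fin.rev i := by rw [hskew, hfix']
    by_cases hi : i.val < n
    · have g1 := (hs_false i).2 ⟨hfix', hi⟩
      have g2 : (if pivFun M (Fin.rev i) = Fin.rev i ∧ (Fin.rev i).val < n
          then false else true) = true := by
        refine (hs_true _).2 ?_
        rintro ⟨-, hc⟩
        rw [Fin.val_rev] at hc
        omega
      change (if pivFun M (Fin.rev i) = Fin.rev i ∧ (Fin.rev i).val < n then false else true) =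
        !(if pivFun M i = i ∧ i.val < n then false else true)
      rw [g1, g2]
      rfl
    · have g1 := (hs_true i).2 (fun hc => hi hc.2)
      have g2 : (if pivFun M (Fin.rev i) = Fin.rev i ∧ (Fin.rev i).val < n
          then false else true) = false := by
        refine (hs_false _).2 ⟨h5, ?_⟩
        rw [Fin.val_rev]
        have := i.isLt
        omega
      change (if pivFun M (Fin.rev i) = Fin.rev i ∧ (Fin.rev i).val < n then false else true) =
        !(if pivFun M i = i ∧ i.val < n then false else true)
      rw [g1, g2]
      rfl
  · -- sect condition at fixed points
    intro i hfix
    have hfix' : pivFun M i = i := hfix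
    constructor
    · intro hc
      exact ((hs_false i).1 hc).2
    · intro hc
      exact (hs_false i).2 ⟨hfix', hc⟩
  · -- sect condition at moved points
    intro i hne
    exact hmoved i hne
  · -- the matrix
    funext u j
    have hlt : (half n u).val < n := half_lt u
    have hr : (⟨(half n u).val, hlt⟩ : Fin n) = u := Fin.ext rfl
    have hiff2 : clanMatrix n (hinv.toPerm (pivFun M)) u j = 1 ↔ M u j = 1 := by
      rw [clanMatrix_one_iff]
      show pivFun M (half n u) = upper n j ↔ M u j = 1
      rcases pivFun_lo hM (half n u) hlt with ⟨he, hno⟩ | ⟨j₀, hj₀, he⟩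
      · rw [hr] at hno
        refine iff_of_false ?_ (hno j)
        rw [he]
        intro hc
        have hval := congrArg Fin.val hc
        rw [val_half, val_upper] at hval
        have := j.isLt
        have := u.isLt
        omega
      · rw [hr] at hj₀
        rw [he]
        constructor
        · intro hc
          rwa [upper_inj hc] at hj₀
        · intro hc
          rw [hrowu u j₀ j hj₀ hc]
    rcases clanMatrix_zero_or_one (σ := hinv.toPerm (pivFun M)) (i := u) (j := j) with c0 | c1
    · rcases hM.1 u j with m0 | m1
      · rw [c0, m0]
      · exact absurd (hiff2.2 m1) (by rw [c0]; exact zero_ne_one)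
    · rw [c1, (hiff2.1 c1).symm]

end Surj

end StmtAux

/-- the bijection `γ ↦ π^γ` from the largest sect `ℰ_n` onto the partial
involutions `𝒫_n` is an order isomorphism from `(ℰ_n, ≤_C)` to `(𝒫_n, ⪯)`: for clans
`γ, τ` of the largest sect, `γ ≤_C τ` iff `π^γ ⪯ π^τ`. -/

theorem stmt16 (n : ℕ) :
    Set.BijOn (fun p : Equiv.Perm (Fin (2 * n)) × (Fin (2 * n) → Bool) => clanMatrix n p.1)
      {p | IsLargestSectClan n p.1 p.2} {M | IsPartialInvolution n M} ∧
    ∀ γ τ : Equiv.Perm (Fin (2 * n)) × (Fin (2 * n) → Bool),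
      IsLargestSectClan n γ.1 γ.2 → IsLargestSectClan n τ.1 τ.2 →
      (BruhatCLE n γ τ ↔ RankControlLE n (clanMatrix n γ.1) (clanMatrix n τ.1)) := by
  constructor
  · refine ⟨?_, ?_, ?_⟩
    · intro p hp
      exact clanMatrix_partialInvolution hp
    · intro p hp q hq hmat
      obtain ⟨h1, h2⟩ := clan_eq_of_matrix_eq hp hq hmat
      exact Prod.ext h1 h2
    · intro M hMmem
      obtain ⟨σ, s, hclan, hmat⟩ := exists_clan_of_partialInvolution hMmem
      exact ⟨(σ, s), hclan, hmat⟩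
  · intro γ τ hγ hτ
    rw [bruhat_iff_star hγ hτ]
    constructor
    · intro S k l h1k hk h1l hl
      rw [rank_block hγ hk hl, rank_block hτ hk hl]
      exact S k l h1k hk h1l hl
    · intro S k l h1k hk h1l hl
      have hr := S k l h1k hk h1l hl
      rwa [rank_block hγ hk hl, rank_block hτ hk hl] at hr
end

section
/- Let γ be a skew-symmetric (n,n)-clan in the largest sect with associated partial involution matrix π^γ. Then for 1 ≤ i < j ≤ 2n: γ(i;j) = rank(π^γ_{i,n}) if i < j ≤ n; γ(i;j) = rank(π^γ_{i,2n−j}) if i ≤ n < j; and γ(i;j) = rank(π^γ_{n,2n−j}) if n < i < j. -/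
section
open Finset
lemma single_linIndep (l : ℕ) (S : Finset (Fin l → ℚ))
    (hS : ↑S ⊆ Set.range (fun j : Fin l => Pi.single j (1:ℚ))) :
    LinearIndependent ℚ (Subtype.val : {x // x ∈ S} → (Fin l → ℚ)) := by
  have hb : LinearIndependent ℚ (fun j : Fin l => Pi.single j (1:ℚ)) := by
    have h1 := (Pi.basisFun ℚ (Fin l)).linearIndependent
    have h2 : ⇑(Pi.basisFun ℚ (Fin l)) = fun j : Fin l => Pi.single j (1:ℚ) :=
      funext fun j => Pi.basisFun_apply ℚ (Fin l) j
    rwa [h2] at h1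
  exact ((LinearIndependent.linearIndepOn_id hb).mono hS)

lemma rank_ite {k l : ℕ} (g : Fin k → ℕ) (hg : Function.Injective g)
    (M : Matrix (Fin k) (Fin l) ℚ) (hM : ∀ i j, M i j = if g i = j.val then 1 else 0) :
    M.rank = (univ.filter fun i => g i < l).card := by
  classical
  rw [Matrix.rank_eq_finrank_span_row]
  set S : Finset (Fin l) := univ.filter (fun j => ∃ i, g i = j.val) with hSdef
  have hrow : ∀ i : Fin k, ∀ hi : g i < l, M i = Pi.single (⟨g i, hi⟩ : Fin l) 1 := by
    intro i hi
    funext b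
    rw [hM, Pi.single_apply]
    by_cases hb : g i = b.val
    · rw [if_pos hb, if_pos (Fin.ext (by simp [hb]))]
    · rw [if_neg hb, if_neg (fun hc => hb (by rw [Fin.ext_iff] at hc; simp at hc; omega))]
  have hrow0 : ∀ i : Fin k, ¬ g i < l → M i = 0 := by
    intro i hi; funext b; rw [hM]
    have hb := b.isLt
    have : g i ≠ b.val := by omega
    simp [this]
  have hspan : Submodule.span ℚ (Set.range M)
      = Submodule.span ℚ ((S.image (fun j => Pi.single j (1:ℚ))) : Set (Fin l → ℚ)) := by
    apply le_antisymm
    · rw [Submodule.span_le]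
      rintro _ ⟨i, rfl⟩
      by_cases hi : g i < l
      · apply Submodule.subset_span
        simp only [coe_image, Set.mem_image, mem_coe]
        refine ⟨⟨g i, hi⟩, ?_, (hrow i hi).symm⟩
        simp only [hSdef, mem_filter, mem_univ, true_and]
        exact ⟨i, rfl⟩
      · rw [hrow0 i hi]; exact Submodule.zero_mem _
    · rw [Submodule.span_le]
      intro x hx
      simp only [coe_image, Set.mem_image, mem_coe] at hx
      obtain ⟨j, hj, rfl⟩ := hx
      simp only [hSdef, mem_filter, mem_univ, true_and] at hj
      obtain ⟨i, hi⟩ := hj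
      have hil : g i < l := hi ▸ j.isLt
      apply Submodule.subset_span
      refine ⟨i, ?_⟩
      have hje : (⟨g i, hil⟩ : Fin l) = j := Fin.ext hi
      rw [hrow i hil, hje]
  rw [show Set.range M.row = Set.range M from rfl, hspan, finrank_span_finset_eq_card]
  · rw [Finset.card_image_of_injective]
    · refine (Finset.card_bij (fun (i : Fin k) (hi : i ∈ univ.filter fun i => g i < l) =>
        (⟨g i, by simpa using hi⟩ : Fin l)) ?_ ?_ ?_).symm
      · intro a ha
        simp only [hSdef, mem_filter, mem_univ, true_and]
        exact ⟨a, rfl⟩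
      · intro a ha b hb hab
        exact hg (by simpa [Fin.ext_iff] using hab)
      · intro j hj
        simp only [hSdef, mem_filter, mem_univ, true_and] at hj
        obtain ⟨i, hi⟩ := hj
        refine ⟨i, by simp [hi ▸ j.isLt], ?_⟩
        show (⟨g i, _⟩ : Fin l) = j
        exact Fin.ext hi
    · intro a b hab
      have := congrFun hab a
      simp only [Pi.single_apply, if_pos rfl] at this
      by_contra h
      rw [if_neg (fun hh : a = b => h hh)] at this
      exact one_ne_zero this
  · apply single_linIndep
    intro x hx
    simp only [coe_image, Set.mem_image, mem_coe] at hx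
    obtain ⟨j, -, rfl⟩ := hx
    exact ⟨j, rfl⟩


end

lemma sub_rank (n k l : ℕ) (hk : k ≤ n) (hl : l ≤ n) (σ : Equiv.Perm (Fin (2*n))) :
    ((clanMatrix n σ).submatrix (Fin.castLE hk) (Fin.castLE hl)).rank
      = (Finset.univ.filter (fun a : Fin k =>
          2*n - l ≤ (σ ⟨a.val, by have := a.isLt; omega⟩).val)).card := by
  have hrank := rank_ite (k := k) (l := l)
    (fun a : Fin k => 2*n - 1 - (σ ⟨a.val, by have := a.isLt; omega⟩).val)
    (by
      intro a b hab
      simp only at hab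
      have h1 := (σ (⟨a.val, by have := a.isLt; omega⟩ : Fin (2*n))).isLt
      have h2 := (σ (⟨b.val, by have := b.isLt; omega⟩ : Fin (2*n))).isLt
      have : (σ (⟨a.val, by have := a.isLt; omega⟩ : Fin (2*n)))
          = (σ (⟨b.val, by have := b.isLt; omega⟩ : Fin (2*n))) := Fin.ext (by omega)
      have := σ.injective this
      exact Fin.ext (by simpa [Fin.ext_iff] using this))
    ((clanMatrix n σ).submatrix (Fin.castLE hk) (Fin.castLE hl))
    (by
      intro a b
      simp only [Matrix.submatrix_apply, clanMatrix]
      have h1 := (σ (⟨a.val, by have := a.isLt; omega⟩ : Fin (2*n))).isLt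
      have hb := b.isLt
      have hcast : ((Fin.castLE hk a : Fin n) : ℕ) = a.val := rfl
      by_cases hc : (σ (⟨a.val, by have := a.isLt; omega⟩ : Fin (2*n))).val = 2*n - 1 - b.val
      · rw [if_pos (Fin.ext (by simpa using hc)), if_pos (by omega)]
      · rw [if_neg (fun hh => hc (by simpa [Fin.ext_iff] using hh)), if_neg (by omega)])
  rw [hrank]
  congr 1
  apply Finset.filter_congr
  intro a _
  have h1 := (σ (⟨a.val, by have := a.isLt; omega⟩ : Fin (2*n))).isLt
  omega

/-- for a skew-symmetric `(n,n)`-clan `γ = (σ, s)` of the largest sect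
with associated partial involution matrix `π^γ`, and `1 ≤ i < j ≤ 2n`:
`γ(i;j) = rank(π^γ_{i,n})` if `i < j ≤ n`; `γ(i;j) = rank(π^γ_{i,2n−j})` if
`i ≤ n < j`; and `γ(i;j) = rank(π^γ_{n,2n−j})` if `n < i < j` (when `j = 2n` the
relevant submatrix has `0` columns and rank `0`). -/
theorem stmt18 (n : ℕ) (σ : Equiv.Perm (Fin (2 * n))) (s : Fin (2 * n) → Bool)
    (h : IsLargestSectClan n σ s) :
    (∀ (i j : ℕ) (_ : 1 ≤ i) (hij : i < j) (hj : j ≤ n),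
      clanPair n σ i j =
        ((clanMatrix n σ).submatrix
          (Fin.castLE (show i ≤ n by omega)) (id : Fin n → Fin n)).rank) ∧
    (∀ (i j : ℕ) (_ : 1 ≤ i) (hi : i ≤ n) (hj : n < j) (hj2 : j ≤ 2 * n) (_ : i < j),
      clanPair n σ i j =
        ((clanMatrix n σ).submatrix (Fin.castLE hi)
          (Fin.castLE (show 2 * n - j ≤ n by omega))).rank) ∧
    (∀ (i j : ℕ) (hi : n < i) (hij : i < j) (hj : j ≤ 2 * n),
      clanPair n σ i j =
        ((clanMatrix n σ).submatrix (id : Fin n → Fin n)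
          (Fin.castLE (show 2 * n - j ≤ n by omega))).rank) := by
  obtain ⟨⟨hinv, hnorm, hcard, hrev, hrevs⟩, hsign, hcross⟩ := h
  refine ⟨?_, ?_, ?_⟩
  · -- case 1 : i < j ≤ n
    intro i j hi1 hij hj
    have hid : (id : Fin n → Fin n) = Fin.castLE (le_refl n) := funext fun x => rfl
    rw [hid, sub_rank n i n (by omega) (le_refl n) σ, clanPair]
    apply Finset.card_bij (fun (t : Fin (2*n)) (ht : t ∈ Finset.univ.filter
      (fun t : Fin (2*n) => t < σ t ∧ t.val + 1 ≤ i ∧ j ≤ (σ t).val)) =>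
      (⟨t.val, by simp only [Finset.mem_filter] at ht; omega⟩ : Fin i))
    · intro t ht
      simp only [Finset.mem_filter, Finset.mem_univ, true_and] at ht ⊢
      obtain ⟨h1, h2, h3⟩ := ht
      have hte : (⟨t.val, by have := t.isLt; omega⟩ : Fin (2*n)) = t := rfl
      rw [hte]
      have hne : σ t ≠ t := by
        intro hh; rw [hh] at h1; exact lt_irrefl _ h1
      have := (hcross t hne).mp (by omega)
      omega
    · intro a ha b hb hab
      exact Fin.ext (by simpa [Fin.ext_iff] using hab)
    · intro a ha
      simp only [Finset.mem_filter, Finset.mem_univ, true_and] at ha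
      refine ⟨⟨a.val, by have := a.isLt; omega⟩, ?_, rfl⟩
      simp only [Finset.mem_filter, Finset.mem_univ, true_and]
      have ha2 := a.isLt
      refine ⟨?_, by omega, by omega⟩
      rw [Fin.lt_def]
      simp only [Fin.val_mk]
      omega
  · -- case 2 : i ≤ n < j
    intro i j hi1 hi hj hj2 hij
    rw [sub_rank n i (2*n-j) hi (by omega) σ, clanPair]
    have hl : 2*n - (2*n - j) = j := by omega
    apply Finset.card_bij (fun (t : Fin (2*n)) (ht : t ∈ Finset.univ.filter
      (fun t : Fin (2*n) => t < σ t ∧ t.val + 1 ≤ i ∧ j ≤ (σ t).val)) =>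
      (⟨t.val, by simp only [Finset.mem_filter] at ht; omega⟩ : Fin i))
    · intro t ht
      simp only [Finset.mem_filter, Finset.mem_univ, true_and] at ht ⊢
      obtain ⟨h1, h2, h3⟩ := ht
      have hte : (⟨t.val, by have := t.isLt; omega⟩ : Fin (2*n)) = t := rfl
      rw [hte]
      omega
    · intro a ha b hb hab
      exact Fin.ext (by simpa [Fin.ext_iff] using hab)
    · intro a ha
      simp only [Finset.mem_filter, Finset.mem_univ, true_and] at ha
      refine ⟨⟨a.val, by have := a.isLt; omega⟩, ?_, rfl⟩
      simp only [Finset.mem_filter, Finset.mem_univ, true_and]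
      have ha2 := a.isLt
      refine ⟨?_, by omega, by omega⟩
      rw [Fin.lt_def]
      simp only [Fin.val_mk]
      omega
  · -- case 3 : n < i < j
    intro i j hi hij hj
    have hid : (id : Fin n → Fin n) = Fin.castLE (le_refl n) := funext fun x => rfl
    rw [hid, sub_rank n n (2*n-j) (le_refl n) (by omega) σ, clanPair]
    have hl : 2*n - (2*n - j) = j := by omega
    apply Finset.card_bij (fun (t : Fin (2*n)) (ht : t ∈ Finset.univ.filter
      (fun t : Fin (2*n) => t < σ t ∧ t.val + 1 ≤ i ∧ j ≤ (σ t).val)) =>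
      (⟨t.val, by
        simp only [Finset.mem_filter, Finset.mem_univ, true_and] at ht
        obtain ⟨h1, h2, h3⟩ := ht
        have hne : σ t ≠ t := by
          intro hh; rw [hh] at h1; exact lt_irrefl _ h1
        have h4 := hcross t hne
        omega⟩ : Fin n))
    · intro t ht
      simp only [Finset.mem_filter, Finset.mem_univ, true_and] at ht ⊢
      obtain ⟨h1, h2, h3⟩ := ht
      have hte : (⟨t.val, by have := t.isLt; omega⟩ : Fin (2*n)) = t := rfl
      rw [hte]
      omega
    · intro a ha b hb hab
      exact Fin.ext (by simpa [Fin.ext_iff] using hab)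
    · intro a ha
      simp only [Finset.mem_filter, Finset.mem_univ, true_and] at ha
      refine ⟨⟨a.val, by have := a.isLt; omega⟩, ?_, rfl⟩
      simp only [Finset.mem_filter, Finset.mem_univ, true_and]
      have ha2 := a.isLt
      refine ⟨?_, by omega, by omega⟩
      rw [Fin.lt_def]
      simp only [Fin.val_mk]
      omega
end
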